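/- Let k ≥ 3 be odd and let T be a tree on n vertices of diameter at least k + 3. Then mdi_k(T) > f_k(n). -/

import Mathlib

/-- `J` is a distance-`k` independent set in `G`: any two distinct vertices of `J`
are at graph distance at least `k + 1`. -/
def DkIndep {V : Type*} (G : SimpleGraph V) (k : ℕ) (J : Set V) : Prop :=
  ∀ ⦃u⦄, u ∈ J → ∀ ⦃v⦄, v ∈ J → u ≠ v → k + 1 ≤ G.dist u v

/-- `J` is a maximal distance-`k` independent set (`k`-MDIS) of `G`. -/
def MaxDkIndep {V : Type*} (G : SimpleGraph V) (k : ℕ) (J : Set V) : Prop :=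
  DkIndep G k J ∧ ∀ J', DkIndep G k J' → J ⊆ J' → J' = J

/-- `mdi G k` is the number of maximal distance-`k` independent sets of `G`. -/
noncomputable def mdi {V : Type*} (G : SimpleGraph V) (k : ℕ) : ℕ :=
  {J : Set V | MaxDkIndep G k J}.ncard

/-- `f_k(n)` from the paper. -/
def fk (k n : ℕ) : ℕ :=
  if n ≤ k + 1 then n else n - (n - k % 2) / (k / 2 + 1) + 1

/-- closed ball `N_k[x]`. -/
def ball {V : Type*} (G : SimpleGraph V) (k : ℕ) (x : V) : Set V :=
  {v | G.dist x v ≤ k}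

/-- a leaf is a vertex of degree 1. -/
def IsLeaf {V : Type*} (G : SimpleGraph V) (v : V) : Prop :=
  (G.neighborSet v).ncard = 1

/-- eccentricity of a vertex. -/
noncomputable def ecc {V : Type*} [Fintype V] (G : SimpleGraph V) (v : V) : ℕ :=
  Finset.univ.sup (G.dist v)

/-- diameter of a finite graph. -/
noncomputable def gdiam {V : Type*} [Fintype V] (G : SimpleGraph V) : ℕ :=
  Finset.univ.sup (ecc G)

/-- a central vertex is one of minimum eccentricity. -/
def IsCentral {V : Type*} [Fintype V] (G : SimpleGraph V) (v : V) : Prop :=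
  ∀ u, ecc G v ≤ ecc G u

/-- a `k`-twin: some other vertex has the same closed `k`-ball. -/
def KTwin {V : Type*} (G : SimpleGraph V) (k : ℕ) (u : V) : Prop :=
  ∃ v, v ≠ u ∧ ball G k u = ball G k v

/-- a diametral leaf: a leaf whose eccentricity equals the diameter. -/
def IsDiametralLeaf {V : Type*} [Fintype V] (G : SimpleGraph V) (u : V) : Prop :=
  IsLeaf G u ∧ ecc G u = gdiam G

/-- a `k`-special pair. -/
def KSpecial {V : Type*} [Fintype V] (G : SimpleGraph V) (k : ℕ) (x y : V) : Prop :=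
  IsDiametralLeaf G x ∧ IsDiametralLeaf G y ∧ KTwin G k x ∧ KTwin G k y ∧
    ball G k x ≠ ball G k y

/-- `mdi*_k(G, ℓ)`. -/
noncomputable def mdiStar {V : Type*} (G : SimpleGraph V) (k : ℕ) (ℓ : V) : ℕ :=
  {J : Set V | MaxDkIndep G k J ∧ ℓ ∈ J ∧ ∃ w ∉ J, ball G k w ∩ J = {ℓ}}.ncard

/-- The spider tree `S_{p,m}`: a center (`none`) together with `p` legs of `m` vertices. -/
def spider (p m : ℕ) : SimpleGraph (Option (Fin p × Fin m)) :=
  SimpleGraph.fromRel fun a b =>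
    match a, b with
    | none, some (_, j) => (j : ℕ) = 0
    | some (i, j), some (i', j') => i = i' ∧ (j : ℕ) + 1 = (j' : ℕ)
    | _, _ => False

/-- `S'_{p,m}`: the spider `S_{p,m}` with one leaf at distance `m` from the center removed. -/
def spider' (p m : ℕ) (hp : 0 < p) (hm : 0 < m) :=
  (spider p m).induce
    {v | v ≠ some (⟨0, hp⟩, ⟨m - 1, Nat.sub_lt hm Nat.one_pos⟩)}

/-- The double spider `B_{p₁,p₂,s}`: two adjacent centers (`Sum.inl false`, `Sum.inl true`),
with `p₁` legs of `s` vertices on the first and `p₂` legs of `s` vertices on the second. -/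
def btree (p₁ p₂ s : ℕ) : SimpleGraph (Bool ⊕ ((Fin p₁ ⊕ Fin p₂) × Fin s)) :=
  SimpleGraph.fromRel fun a b =>
    match a, b with
    | Sum.inl x, Sum.inl y => x ≠ y
    | Sum.inl false, Sum.inr (Sum.inl _, j) => (j : ℕ) = 0
    | Sum.inl true, Sum.inr (Sum.inr _, j) => (j : ℕ) = 0
    | Sum.inr (c, j), Sum.inr (c', j') => c = c' ∧ (j : ℕ) + 1 = (j' : ℕ)
    | _, _ => False

/-- `G` contains a subgraph isomorphic to `H`. -/
def ContainsSub {V W : Type*} (G : SimpleGraph V) (H : SimpleGraph W) : Prop :=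
  ∃ f : W → V, Function.Injective f ∧ ∀ a b, H.Adj a b → G.Adj (f a) (f b)

/-- A pendant path on `s` vertices `P 0, …, P (s-1)` attached to `w`:
`P 0` is a leaf, consecutive vertices are adjacent, interior vertices have degree 2,
and `P (s-1)` is adjacent to `w`. -/
def IsPendantPath {V : Type*} (T : SimpleGraph V) (s : ℕ) (P : ℕ → V) (w : V) : Prop :=
  Set.InjOn P (Set.Iio s) ∧ (∀ i < s, P i ≠ w) ∧ IsLeaf T (P 0) ∧
    (∀ i, i + 1 < s → T.Adj (P i) (P (i + 1))) ∧
    (∀ i, 0 < i → i < s → (T.neighborSet (P i)).ncard = 2) ∧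
    T.Adj (P (s - 1)) w

/-- Isomorphism of simple graphs on `Fin n` as a setoid. -/
def graphSetoid (n : ℕ) : Setoid (SimpleGraph (Fin n)) where
  r G H := Nonempty (G ≃g H)
  iseqv := ⟨fun _ => ⟨SimpleGraph.Iso.refl⟩, fun ⟨e⟩ => ⟨e.symm⟩, fun ⟨e⟩ ⟨f⟩ => ⟨e.trans f⟩⟩

/-- The number of isomorphism classes of graphs in a set of graphs on `Fin n`. -/
noncomputable def numIsoClasses {n : ℕ} (S : Set (SimpleGraph (Fin n))) : ℕ :=
  ((fun G => Quotient.mk (graphSetoid n) G) '' S).ncard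


set_option linter.unusedSectionVars false

section TreeGeo
open SimpleGraph

variable {V : Type} [DecidableEq V] {T : SimpleGraph V}

lemma dist_getVert_le (hc : T.Connected) {a b : V} (W : T.Walk a b) :
    ∀ i, T.dist a (W.getVert i) ≤ i := by
  intro i
  induction i with
  | zero => simp [SimpleGraph.Walk.getVert_zero]
  | succ i ih =>
    by_cases hi : i < W.length
    · have hadj := W.adj_getVert_succ hi
      have h1 : T.dist (W.getVert i) (W.getVert (i+1)) ≤ 1 := by
        have := SimpleGraph.dist_le (SimpleGraph.Walk.cons hadj SimpleGraph.Walk.nil)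
        simpa using this
      have := hc.dist_triangle (u := a) (v := W.getVert i) (w := W.getVert (i+1))
      omega
    · rw [W.getVert_of_length_le (by omega)]
      have := SimpleGraph.dist_le W
      omega

lemma dist_getVert_right (hc : T.Connected) {a b : V} (W : T.Walk a b) :
    ∀ t i, i + t = W.length → T.dist (W.getVert i) b ≤ t := by
  intro t
  induction t with
  | zero =>
    intro i hi
    rw [W.getVert_of_length_le (by omega)]
    simp [SimpleGraph.dist_self]
  | succ t ih =>
    intro i hi
    have hadj := W.adj_getVert_succ (i := i) (by omega)
    have h1 : T.dist (W.getVert i) (W.getVert (i+1)) ≤ 1 := by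
      have := SimpleGraph.dist_le (SimpleGraph.Walk.cons hadj SimpleGraph.Walk.nil)
      simpa using this
    have h2 := ih (i+1) (by omega)
    have := hc.dist_triangle (u := W.getVert i) (v := W.getVert (i+1)) (w := b)
    omega

lemma getVert_dist_eq (hc : T.Connected) {a b : V} (W : T.Walk a b)
    (hW : W.length = T.dist a b) {i : ℕ} (hi : i ≤ W.length) :
    T.dist a (W.getVert i) = i ∧ T.dist (W.getVert i) b = W.length - i := by
  have h1 := dist_getVert_le hc W i
  have h2 := dist_getVert_right hc W (W.length - i) i (by omega)
  have h3 := hc.dist_triangle (u := a) (v := W.getVert i) (w := b)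
  omega

lemma dist_getVert_chain (hc : T.Connected) {a b : V} (W : T.Walk a b) :
    ∀ t i, i + t ≤ W.length → T.dist (W.getVert i) (W.getVert (i+t)) ≤ t := by
  intro t
  induction t with
  | zero => intro i _; simp [SimpleGraph.dist_self]
  | succ t ih =>
    intro i hit
    have hadj := W.adj_getVert_succ (i := i) (by omega)
    have h1 : T.dist (W.getVert i) (W.getVert (i+1)) ≤ 1 := by
      have := SimpleGraph.dist_le (SimpleGraph.Walk.cons hadj SimpleGraph.Walk.nil)
      simpa using this
    have h2 := ih (i+1) (by omega)
    have := hc.dist_triangle (u := W.getVert i) (v := W.getVert (i+1)) (w := W.getVert (i+1+t))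
    have he : i + 1 + t = i + (t+1) := by omega
    rw [he] at h2 this
    omega

lemma getVert_dist_pair (hc : T.Connected) {a b : V} (W : T.Walk a b)
    (hW : W.length = T.dist a b) {i j : ℕ} (hi : i ≤ j) (hj : j ≤ W.length) :
    T.dist (W.getVert i) (W.getVert j) = j - i := by
  have h1 := dist_getVert_chain hc W (j - i) i (by omega)
  have he : i + (j - i) = j := by omega
  rw [he] at h1
  have h2 := (getVert_dist_eq hc W hW (le_trans hi hj)).1
  have h3 := (getVert_dist_eq hc W hW hj).1
  have h4 := hc.dist_triangle (u := a) (v := W.getVert i) (w := W.getVert j)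
  omega

end TreeGeo

section TreeGeo2
open SimpleGraph
variable {V : Type} [DecidableEq V] {T : SimpleGraph V}



lemma tree_path_length (hT : T.IsTree) {a b : V} (p : T.Walk a b) (hp : p.IsPath) :
    p.length = T.dist a b := by
  obtain ⟨q, hq⟩ := hT.isConnected.exists_walk_length_eq_dist a b
  have hbp : q.bypass.IsPath := SimpleGraph.Walk.bypass_isPath q
  have h1 : q.bypass.length ≤ q.length := SimpleGraph.Walk.length_bypass_le q
  have h2 : T.dist a b ≤ q.bypass.length := SimpleGraph.dist_le _
  obtain ⟨p₀, hp₀, huniq⟩ := hT.existsUnique_path a b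
  have e1 : p = p₀ := huniq p hp
  have e2 : q.bypass = p₀ := huniq _ hbp
  rw [e1, ← e2]; omega

lemma isPath_of_length_eq_dist (hc : T.Connected) {a b : V} (p : T.Walk a b)
    (h : p.length = T.dist a b) : p.IsPath := by
  induction p with
  | nil => exact SimpleGraph.Walk.IsPath.nil
  | @cons a c b hadj q ih =>
    rw [SimpleGraph.Walk.length_cons] at h
    by_cases hmem : a ∈ q.support
    · exfalso
      have h1 : T.dist a b ≤ (q.dropUntil a hmem).length := SimpleGraph.dist_le _
      have h2 : (q.dropUntil a hmem).length ≤ q.length := SimpleGraph.Walk.length_dropUntil_le q hmem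
      omega
    · have hac : T.dist a c ≤ 1 := by
        have := SimpleGraph.dist_le (SimpleGraph.Walk.cons hadj SimpleGraph.Walk.nil)
        simpa using this
      have hcb : T.dist c b ≤ q.length := SimpleGraph.dist_le q
      have htri : T.dist a b ≤ T.dist a c + T.dist c b := hc.dist_triangle
      have hq : q.length = T.dist c b := by omega
      exact (ih hq).cons hmem

lemma append_isPath {a b c : V} {p : T.Walk a b} {q : T.Walk b c} (hp : p.IsPath) (hq : q.IsPath)
    (h : ∀ z ∈ p.support, z ∈ q.support → z = b) : (p.append q).IsPath := by
  rw [SimpleGraph.Walk.isPath_def, SimpleGraph.Walk.support_append]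
  refine List.Nodup.append hp.support_nodup hq.support_nodup.tail ?_
  intro z hzp hzq
  have hz : z ∈ q.support := List.mem_of_mem_tail hzq
  have hzb : z = b := h z hzp hz
  subst hzb
  have hnd := hq.support_nodup
  rw [SimpleGraph.Walk.support_eq_cons] at hnd
  exact (List.nodup_cons.mp hnd).1 hzq

lemma exists_split_first {a b : V} (q : T.Walk a b) (S : Set V) (hb : b ∈ S) :
    ∃ (c : V) (q₁ : T.Walk a c) (q₂ : T.Walk c b), c ∈ S ∧ q₁.append q₂ = q ∧
      ∀ v ∈ q₁.support, v ∈ S → v = c := by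
  induction q with
  | nil => exact ⟨_, SimpleGraph.Walk.nil, SimpleGraph.Walk.nil, hb, rfl, by simp⟩
  | @cons u v w hadj q ih =>
    by_cases hu : u ∈ S
    · exact ⟨u, SimpleGraph.Walk.nil, SimpleGraph.Walk.cons hadj q, hu, rfl, by simp⟩
    · obtain ⟨c, q₁, q₂, hc, heq, hfirst⟩ := ih hb
      refine ⟨c, SimpleGraph.Walk.cons hadj q₁, q₂, hc, by rw [SimpleGraph.Walk.cons_append, heq], ?_⟩
      intro z hz hzS
      rw [SimpleGraph.Walk.support_cons] at hz
      rcases List.mem_cons.mp hz with rfl | hz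
      · exact absurd hzS hu
      · exact hfirst z hz hzS

lemma exists_median (hT : T.IsTree) (u x r : V) :
    ∃ m, T.dist u x = T.dist u m + T.dist m x ∧ T.dist x r = T.dist x m + T.dist m r ∧
      T.dist u r = T.dist u m + T.dist m r := by
  obtain ⟨q, hq, -⟩ := hT.existsUnique_path u x
  obtain ⟨p, hp, -⟩ := hT.existsUnique_path x r
  obtain ⟨m, q₁, q₂, hm, heq, hfirst⟩ := exists_split_first q {z | z ∈ p.support}
    (by simp [SimpleGraph.Walk.start_mem_support])
  have hq' : (q₁.append q₂).IsPath := heq ▸ hq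
  have hq₁ : q₁.IsPath := SimpleGraph.Walk.IsPath.of_append_left hq'
  have hq₂ : q₂.IsPath := SimpleGraph.Walk.IsPath.of_append_right hq'
  have hm' : m ∈ p.support := hm
  have l1 : q₁.length = T.dist u m := tree_path_length hT q₁ hq₁
  have l2 : q₂.length = T.dist m x := tree_path_length hT q₂ hq₂
  have l0 : q.length = T.dist u x := tree_path_length hT q hq
  have lsum : q₁.length + q₂.length = q.length := by
    rw [← heq, SimpleGraph.Walk.length_append]
  have l3 : (p.takeUntil m hm').length = T.dist x m :=
    tree_path_length hT _ (hp.takeUntil hm')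
  have l4 : (p.dropUntil m hm').length = T.dist m r :=
    tree_path_length hT _ (hp.dropUntil hm')
  have l5 : p.length = T.dist x r := tree_path_length hT p hp
  have lsum2 : (p.takeUntil m hm').length + (p.dropUntil m hm').length = p.length := by
    rw [← SimpleGraph.Walk.length_append, p.take_spec hm']
  have hW3 : (q₁.append (p.dropUntil m hm')).IsPath := by
    refine append_isPath hq₁ (hp.dropUntil hm') ?_
    intro z hz1 hz2
    exact hfirst z hz1 (SimpleGraph.Walk.support_dropUntil_subset p hm' hz2)
  have l6 : (q₁.append (p.dropUntil m hm')).length = T.dist u r :=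
    tree_path_length hT _ hW3
  rw [SimpleGraph.Walk.length_append] at l6
  exact ⟨m, by omega, by omega, by omega⟩

lemma mem_path_of_between (hT : T.IsTree) {x r s : V} (p : T.Walk x r) (hp : p.IsPath)
    (h : T.dist x s + T.dist s r = T.dist x r) : s ∈ p.support := by
  obtain ⟨ps, hps, -⟩ := hT.existsUnique_path x s
  obtain ⟨ps', hps', -⟩ := hT.existsUnique_path s r
  have hlen : (ps.append ps').length = T.dist x r := by
    rw [SimpleGraph.Walk.length_append, tree_path_length hT ps hps,
      tree_path_length hT ps' hps', h]
  have hPath := isPath_of_length_eq_dist hT.isConnected _ hlen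
  obtain ⟨p₀, hp₀, huniq⟩ := hT.existsUnique_path x r
  have heq : ps.append ps' = p := (huniq _ hPath).trans (huniq p hp).symm
  rw [← heq, SimpleGraph.Walk.mem_support_append_iff]
  exact Or.inl (SimpleGraph.Walk.end_mem_support ps)

lemma dist_collinear (hT : T.IsTree) {x r s t : V}
    (hs : T.dist x s + T.dist s r = T.dist x r) (ht : T.dist x t + T.dist t r = T.dist x r) :
    T.dist x t = T.dist x s + T.dist s t ∨ T.dist x s = T.dist x t + T.dist t s := by
  obtain ⟨p, hp, -⟩ := hT.existsUnique_path x r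
  have hsp := mem_path_of_between hT p hp hs
  have htp' := mem_path_of_between hT p hp ht
  rw [← p.take_spec hsp, SimpleGraph.Walk.mem_support_append_iff] at htp'
  rcases htp' with htp | htp
  · right
    have hp₁ : (p.takeUntil s hsp).IsPath := hp.takeUntil hsp
    have l1 : ((p.takeUntil s hsp).takeUntil t htp).length = T.dist x t :=
      tree_path_length hT _ (hp₁.takeUntil htp)
    have l2 : ((p.takeUntil s hsp).dropUntil t htp).length = T.dist t s :=
      tree_path_length hT _ (hp₁.dropUntil htp)
    have l3 : (p.takeUntil s hsp).length = T.dist x s := tree_path_length hT _ hp₁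
    have lsum : ((p.takeUntil s hsp).takeUntil t htp).length
        + ((p.takeUntil s hsp).dropUntil t htp).length = (p.takeUntil s hsp).length := by
      rw [← SimpleGraph.Walk.length_append, SimpleGraph.Walk.take_spec]
    omega
  · left
    have hp₂ : (p.dropUntil s hsp).IsPath := hp.dropUntil hsp
    have l1 : ((p.dropUntil s hsp).takeUntil t htp).length = T.dist s t :=
      tree_path_length hT _ (hp₂.takeUntil htp)
    have l2 : ((p.dropUntil s hsp).dropUntil t htp).length = T.dist t r :=
      tree_path_length hT _ (hp₂.dropUntil htp)
    have l3 : (p.dropUntil s hsp).length = T.dist s r := tree_path_length hT _ hp₂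
    have lsum : ((p.dropUntil s hsp).takeUntil t htp).length
        + ((p.dropUntil s hsp).dropUntil t htp).length = (p.dropUntil s hsp).length := by
      rw [← SimpleGraph.Walk.length_append, SimpleGraph.Walk.take_spec]
    omega

lemma key_clique (hT : T.IsTree) {k : ℕ} {r x u w : V}
    (hu : T.dist r u ≤ T.dist r x) (hw : T.dist r w ≤ T.dist r x)
    (hxu : T.dist x u ≤ k) (hxw : T.dist x w ≤ k) : T.dist u w ≤ k := by
  obtain ⟨s, hs1, hs2, hs3⟩ := exists_median hT u x r
  obtain ⟨t, ht1, ht2, ht3⟩ := exists_median hT w x r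
  have c1 : T.dist r u = T.dist u r := SimpleGraph.dist_comm ..
  have c2 : T.dist r x = T.dist x r := SimpleGraph.dist_comm ..
  have c3 : T.dist r w = T.dist w r := SimpleGraph.dist_comm ..
  have c4 : T.dist u x = T.dist x u := SimpleGraph.dist_comm ..
  have c5 : T.dist w x = T.dist x w := SimpleGraph.dist_comm ..
  have c6 : T.dist s x = T.dist x s := SimpleGraph.dist_comm ..
  have c7 : T.dist t x = T.dist x t := SimpleGraph.dist_comm ..
  have c8 : T.dist u w = T.dist w u := SimpleGraph.dist_comm ..
  have c9 : T.dist s t = T.dist t s := SimpleGraph.dist_comm ..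
  have hus : T.dist u s ≤ T.dist x s := by omega
  have hwt : T.dist w t ≤ T.dist x t := by omega
  rcases dist_collinear hT hs2.symm ht2.symm with hcol | hcol
  · have t1 : T.dist u w ≤ T.dist u s + T.dist s w := hT.isConnected.dist_triangle (v := s)
    have t2 : T.dist s w ≤ T.dist s t + T.dist t w := hT.isConnected.dist_triangle (v := t)
    have c10 : T.dist t w = T.dist w t := SimpleGraph.dist_comm ..
    omega
  · have t1 : T.dist w u ≤ T.dist w t + T.dist t u := hT.isConnected.dist_triangle (v := t)
    have t2 : T.dist t u ≤ T.dist t s + T.dist s u := hT.isConnected.dist_triangle (v := s)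
    have c10 : T.dist s u = T.dist u s := SimpleGraph.dist_comm ..
    omega


end TreeGeo2

section Counting
open SimpleGraph

variable {V : Type} [DecidableEq V] [Fintype V] {T : SimpleGraph V}

def IndepIn (T : SimpleGraph V) (k : ℕ) (S J : Set V) : Prop :=
  J ⊆ S ∧ J.Pairwise fun u v => k + 1 ≤ T.dist u v

def MaxIn (T : SimpleGraph V) (k : ℕ) (S J : Set V) : Prop :=
  IndepIn T k S J ∧ ∀ v ∈ S, v ∉ J → ∃ j ∈ J, T.dist v j ≤ k

noncomputable def numIn (T : SimpleGraph V) (k : ℕ) (S : Set V) : ℕ :=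
  {J | MaxIn T k S J}.ncard

noncomputable def alfIn (T : SimpleGraph V) (k : ℕ) (S : Set V) : ℕ :=
  sSup (Set.ncard '' {A | IndepIn T k S A})

lemma alf_bdd (T : SimpleGraph V) (k : ℕ) (S : Set V) :
    BddAbove (Set.ncard '' {A | IndepIn T k S A}) := by
  refine ⟨Fintype.card V, ?_⟩
  rintro _ ⟨A, -, rfl⟩
  have := Set.ncard_le_ncard (Set.subset_univ A) (Set.toFinite _)
  rwa [Set.ncard_univ, Nat.card_eq_fintype_card] at this

lemma indep_le_alf {T : SimpleGraph V} {k : ℕ} {S A : Set V} (hA : IndepIn T k S A) :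
    A.ncard ≤ alfIn T k S :=
  le_csSup (alf_bdd T k S) ⟨A, hA, rfl⟩

lemma exists_alf_attain (T : SimpleGraph V) (k : ℕ) (S : Set V) :
    ∃ A, IndepIn T k S A ∧ A.ncard = alfIn T k S := by
  have hne : (Set.ncard '' {A | IndepIn T k S A}).Nonempty :=
    ⟨0, ∅, ⟨Set.empty_subset S, Set.pairwise_empty _⟩, Set.ncard_empty V⟩
  obtain ⟨A, hA, hcard⟩ := Nat.sSup_mem hne (alf_bdd T k S)
  exact ⟨A, hA, hcard⟩

lemma exists_maxIn_ext (T : SimpleGraph V) (k : ℕ) (S I : Set V) (hI : IndepIn T k S I) :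
    ∃ J, MaxIn T k S J ∧ I ⊆ J := by
  obtain ⟨J, hJ, hmax⟩ := Set.Finite.exists_maximalFor Set.ncard
    {J | IndepIn T k S J ∧ I ⊆ J} (Set.toFinite _) ⟨I, hI, subset_rfl⟩
  refine ⟨J, ⟨hJ.1, ?_⟩, hJ.2⟩
  intro v hvS hvJ
  by_contra hno
  push_neg at hno
  have hmem : insert v J ∈ {J | IndepIn T k S J ∧ I ⊆ J} := by
    refine ⟨⟨Set.insert_subset hvS hJ.1.1, ?_⟩, hJ.2.trans (Set.subset_insert _ _)⟩
    rw [Set.pairwise_insert]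
    refine ⟨hJ.1.2, ?_⟩
    intro j hj _
    have h1 := hno j hj
    have h2 : T.dist j v = T.dist v j := SimpleGraph.dist_comm ..
    constructor <;> omega
  have heq := hmax hmem (by
    rw [Set.ncard_insert_of_notMem hvJ (Set.toFinite _)]; omega)
  rw [Set.ncard_insert_of_notMem hvJ (Set.toFinite _)] at heq
  omega

lemma numIn_empty (T : SimpleGraph V) (k : ℕ) : numIn T k (∅ : Set V) = 1 := by
  have : {J | MaxIn T k (∅ : Set V) J} = {(∅ : Set V)} := by
    ext J
    simp only [Set.mem_setOf_eq, Set.mem_singleton_iff]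
    constructor
    · rintro ⟨⟨hsub, -⟩, -⟩
      exact Set.subset_empty_iff.mp hsub
    · rintro rfl
      exact ⟨⟨Set.empty_subset _, Set.pairwise_empty _⟩, by simp⟩
  rw [numIn, this, Set.ncard_singleton]

end Counting
section Counting2
open SimpleGraph

variable {V : Type} [DecidableEq V] [Fintype V] {T : SimpleGraph V}

lemma class_unique (hT : T.IsTree) {k : ℕ} {S : Set V} {r x : V}
    (hdeep : ∀ z ∈ S, T.dist r z ≤ T.dist r x)
    {J : Set V} (hJ : MaxIn T k S J) {c c' : V} (hc : c ∈ J) (hc' : c' ∈ J)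
    (h1 : T.dist x c ≤ k) (h2 : T.dist x c' ≤ k) : c = c' := by
  by_contra hne
  have hp := hJ.1.2 hc hc' hne
  have := key_clique hT (hdeep c (hJ.1.1 hc)) (hdeep c' (hJ.1.1 hc')) h1 h2
  omega

lemma class_exists {k : ℕ} {S J : Set V} (hJ : MaxIn T k S J) {x : V} (hx : x ∈ S) :
    ∃ c ∈ J, T.dist x c ≤ k := by
  by_cases hxJ : x ∈ J
  · exact ⟨x, hxJ, by simp [SimpleGraph.dist_self]⟩
  · exact hJ.2 x hx hxJ

lemma maxIn_insert {k : ℕ} {S : Set V} {x : V} (hx : x ∈ S)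
    {J' : Set V} (h : MaxIn T k (S \ {v | v ∈ S ∧ T.dist x v ≤ k}) J') :
    MaxIn T k S (insert x J') := by
  have hJS : J' ⊆ S := fun j hj => ((h.1.1 hj).1)
  have hfar : ∀ j ∈ J', ¬ (T.dist x j ≤ k) := by
    intro j hj hle
    exact (h.1.1 hj).2 ⟨hJS hj, hle⟩
  constructor
  · constructor
    · exact Set.insert_subset hx hJS
    · rw [Set.pairwise_insert]
      refine ⟨h.1.2, fun j hj _ => ?_⟩
      have h1 := hfar j hj
      have hcomm : T.dist j x = T.dist x j := SimpleGraph.dist_comm ..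
      constructor <;> omega
  · intro v hv hvJ
    by_cases hvC : T.dist x v ≤ k
    · exact ⟨x, Set.mem_insert _ _, by rw [SimpleGraph.dist_comm]; exact hvC⟩
    · have hv' : v ∈ S \ {v | v ∈ S ∧ T.dist x v ≤ k} := ⟨hv, fun hmem => hvC hmem.2⟩
      obtain ⟨j, hj, hd⟩ := h.2 v hv' (fun hj => hvJ (Set.mem_insert_of_mem _ hj))
      exact ⟨j, Set.mem_insert_of_mem _ hj, hd⟩

lemma step_count (hT : T.IsTree) (k : ℕ) {S : Set V} {r x : V} (hx : x ∈ S)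
    (hdeep : ∀ z ∈ S, T.dist r z ≤ T.dist r x) :
    numIn T k (S \ {v | v ∈ S ∧ T.dist x v ≤ k}) + {v | v ∈ S ∧ T.dist x v ≤ k}.ncard
      ≤ numIn T k S + 1 := by
  classical
  set C := {v | v ∈ S ∧ T.dist x v ≤ k} with hC
  have hxC : x ∈ C := ⟨hx, by simp [SimpleGraph.dist_self]⟩
  have hext : ∀ c ∈ C \ {x}, ∃ J, MaxIn T k S J ∧ c ∈ J := by
    intro c hc
    obtain ⟨J, hJ, hcJ⟩ := exists_maxIn_ext T k S {c}
      ⟨Set.singleton_subset_iff.mpr hc.1.1, Set.pairwise_singleton _ _⟩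
    exact ⟨J, hJ, hcJ rfl⟩
  choose! g hg1 hg2 using hext
  have hxnot : ∀ J' ∈ {J' | MaxIn T k (S \ C) J'}, x ∉ J' := by
    intro J' hJ' hxJ'
    exact ((hJ'.1.1 hxJ').2) hxC
  have hM1sub : (insert x ·) '' {J' | MaxIn T k (S \ C) J'} ⊆ {J | MaxIn T k S J} := by
    rintro _ ⟨J', hJ', rfl⟩; exact maxIn_insert hx hJ'
  have hM2sub : g '' (C \ {x}) ⊆ {J | MaxIn T k S J} := by
    rintro _ ⟨c, hc, rfl⟩; exact hg1 c hc
  have hxM2 : ∀ c ∈ C \ {x}, x ∉ g c := by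
    intro c hc hxg
    have := class_unique hT hdeep (hg1 c hc) hxg (hg2 c hc)
      (by simp [SimpleGraph.dist_self]) hc.1.2
    exact hc.2 this.symm
  have hdisj : Disjoint ((insert x ·) '' {J' | MaxIn T k (S \ C) J'}) (g '' (C \ {x})) := by
    rw [Set.disjoint_left]
    rintro _ ⟨J', hJ', rfl⟩ ⟨c, hc, hgc⟩
    exact hxM2 c hc (by rw [hgc]; exact Set.mem_insert x J')
  have hinj1 : Set.InjOn (insert x ·) {J' | MaxIn T k (S \ C) J'} := by
    intro a ha b hb hab
    have hab' : insert x a = insert x b := hab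
    rw [← Set.insert_diff_self_of_notMem (hxnot a ha), hab',
        Set.insert_diff_self_of_notMem (hxnot b hb)]
  have hinj2 : Set.InjOn g (C \ {x}) := by
    intro c hc c' hc' hgc
    refine class_unique hT hdeep (hg1 c hc) (hg2 c hc) ?_ hc.1.2 hc'.1.2
    rw [hgc]; exact hg2 c' hc'
  have hcount : ((insert x ·) '' {J' | MaxIn T k (S \ C) J'}).ncard + (g '' (C \ {x})).ncard
      ≤ numIn T k S := by
    rw [← Set.ncard_union_eq hdisj (Set.toFinite _) (Set.toFinite _)]
    exact Set.ncard_le_ncard (Set.union_subset hM1sub hM2sub) (Set.toFinite _)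
  have hM1card : ((insert x ·) '' {J' | MaxIn T k (S \ C) J'}).ncard = numIn T k (S \ C) :=
    Set.ncard_image_of_injOn hinj1
  have hM2card : (g '' (C \ {x})).ncard = (C \ {x}).ncard := Set.ncard_image_of_injOn hinj2
  have hCx : (C \ {x}).ncard + 1 = C.ncard :=
    Set.ncard_diff_singleton_add_one hxC (Set.toFinite _)
  omega

lemma alf_step (T : SimpleGraph V) (k : ℕ) {S : Set V} {x : V} (hx : x ∈ S) :
    alfIn T k (S \ {v | v ∈ S ∧ T.dist x v ≤ k}) + 1 ≤ alfIn T k S := by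
  obtain ⟨A, hA, hcard⟩ := exists_alf_attain T k (S \ {v | v ∈ S ∧ T.dist x v ≤ k})
  have hxA : x ∉ A := fun h => (hA.1 h).2 ⟨hx, by simp [SimpleGraph.dist_self]⟩
  have hins : IndepIn T k S (insert x A) := by
    constructor
    · exact Set.insert_subset hx (hA.1.trans Set.diff_subset)
    · rw [Set.pairwise_insert]
      refine ⟨hA.2, fun j hj _ => ?_⟩
      have hfar : ¬ (T.dist x j ≤ k) := fun hle => (hA.1 hj).2 ⟨(hA.1 hj).1, hle⟩
      have hcomm : T.dist j x = T.dist x j := SimpleGraph.dist_comm ..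
      constructor <;> omega
  have hle := indep_le_alf hins
  rw [Set.ncard_insert_of_notMem hxA (Set.toFinite _)] at hle
  omega

lemma lemB (hT : T.IsTree) (k : ℕ) :
    ∀ (n : ℕ) (S : Set V), S.ncard ≤ n → S.ncard + 1 ≤ numIn T k S + alfIn T k S := by
  intro n
  induction n with
  | zero =>
    intro S hS
    have h0 : S = ∅ := (Set.ncard_eq_zero (Set.toFinite _)).mp (by omega)
    subst h0
    rw [numIn_empty]
    simp only [Set.ncard_empty]
    omega
  | succ n ih =>
    intro S hS
    rcases Set.eq_empty_or_nonempty S with rfl | hne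
    · rw [numIn_empty]
      simp only [Set.ncard_empty]
      omega
    · obtain ⟨r, hr⟩ := hne
      obtain ⟨x, hxS, hdeep⟩ : ∃ x ∈ S, ∀ z ∈ S, T.dist r z ≤ T.dist r x := by
        obtain ⟨x, hx1, hx2⟩ := Finset.exists_max_image (Set.toFinite S).toFinset (T.dist r)
          ⟨r, (Set.toFinite S).mem_toFinset.mpr hr⟩
        exact ⟨x, (Set.toFinite S).mem_toFinset.mp hx1,
          fun z hz => hx2 z ((Set.toFinite S).mem_toFinset.mpr hz)⟩
      have hxC : x ∈ {v | v ∈ S ∧ T.dist x v ≤ k} := ⟨hxS, by simp [SimpleGraph.dist_self]⟩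
      have hCS : {v | v ∈ S ∧ T.dist x v ≤ k} ⊆ S := fun v hv => hv.1
      have hncard : (S \ {v | v ∈ S ∧ T.dist x v ≤ k}).ncard
          + {v | v ∈ S ∧ T.dist x v ≤ k}.ncard = S.ncard :=
        Set.ncard_diff_add_ncard_of_subset hCS (Set.toFinite _)
      have hCpos : 0 < {v | v ∈ S ∧ T.dist x v ≤ k}.ncard :=
        (Set.ncard_pos (Set.toFinite _)).mpr ⟨x, hxC⟩
      have h1 := ih (S \ {v | v ∈ S ∧ T.dist x v ≤ k}) (by omega)
      have h2 := step_count hT k hxS hdeep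
      have h3 := alf_step T k hxS
      omega

end Counting2
section PartD
open SimpleGraph

variable {V : Type} [DecidableEq V] [Fintype V] {T : SimpleGraph V}

lemma alpha_bound (hT : T.IsTree) {k m : ℕ} (hk : k = 2*m+1) {x y : V}
    (hxy : 2*m + 4 ≤ T.dist x y) {A : Set V} (hA : IndepIn T k Set.univ A) :
    A.ncard * (m+1) + 1 ≤ Fintype.card V := by
  classical
  have hconn := hT.isConnected
  set B : V → Finset V := fun a => Finset.univ.filter (fun v => T.dist a v ≤ m) with hB
  have hcard : ∀ a, m + 1 ≤ (B a).card := by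
    intro a
    have htri := hconn.dist_triangle (u := x) (v := a) (w := y)
    have hcomm : T.dist x a = T.dist a x := SimpleGraph.dist_comm ..
    obtain ⟨e, he⟩ : ∃ e, m ≤ T.dist a e := by
      by_cases h : m ≤ T.dist a x
      · exact ⟨x, h⟩
      · exact ⟨y, by omega⟩
    obtain ⟨W, hW⟩ := hconn.exists_walk_length_eq_dist a e
    have hlen : m ≤ W.length := by omega
    have hmap : (Finset.range (m+1)).image W.getVert ⊆ B a := by
      intro v hv
      simp only [Finset.mem_image, Finset.mem_range] at hv
      obtain ⟨i, hi, rfl⟩ := hv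
      simp only [hB, Finset.mem_filter, Finset.mem_univ, true_and]
      have := (getVert_dist_eq hconn W hW (i := i) (by omega)).1
      omega
    have hinj : Set.InjOn W.getVert ↑(Finset.range (m+1)) := by
      intro i hi j hj hij
      simp only [Finset.coe_range, Set.mem_Iio] at hi hj
      have h1 := (getVert_dist_eq hconn W hW (i := i) (by omega)).1
      have h2 := (getVert_dist_eq hconn W hW (i := j) (by omega)).1
      rw [hij] at h1
      omega
    calc m + 1 = (Finset.range (m+1)).card := (Finset.card_range _).symm
      _ = ((Finset.range (m+1)).image W.getVert).card :=
          (Finset.card_image_of_injOn hinj).symm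
      _ ≤ (B a).card := Finset.card_le_card hmap
  have huncov : ∃ v, ∀ a ∈ A, ¬ (T.dist a v ≤ m) := by
    by_contra hno
    push_neg at hno
    choose f hfA hfd using hno
    have hedge : ∀ v w : V, T.Adj v w → f v = f w := by
      intro v w hvw
      by_contra hne
      have h1 : k + 1 ≤ T.dist (f v) (f w) := hA.2 (hfA v) (hfA w) hne
      have t1 := hconn.dist_triangle (u := f v) (v := v) (w := f w)
      have t2 := hconn.dist_triangle (u := v) (v := w) (w := f w)
      have hvw1 : T.dist v w ≤ 1 := by
        have := SimpleGraph.dist_le (SimpleGraph.Walk.cons hvw SimpleGraph.Walk.nil)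
        simpa using this
      have c1 : T.dist (f v) v = T.dist v (f v) := SimpleGraph.dist_comm ..
      have c2 : T.dist w (f w) = T.dist (f w) w := SimpleGraph.dist_comm ..
      have h2 := hfd v
      have h3 := hfd w
      omega
    have hwalk : ∀ (v w : V), T.Walk v w → f v = f w := by
      intro v w p
      induction p with
      | nil => rfl
      | cons h q ih => exact (hedge _ _ h).trans ih
    obtain ⟨p⟩ := hconn.preconnected x y
    have hfxy := hwalk x y p
    have t1 := hconn.dist_triangle (u := x) (v := f x) (w := y)
    have c1 : T.dist x (f x) = T.dist (f x) x := SimpleGraph.dist_comm ..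
    have h2 : T.dist (f x) y ≤ m := by rw [hfxy]; exact hfd y
    have h3 := hfd x
    omega
  obtain ⟨v₀, hv₀⟩ := huncov
  set Af := (Set.toFinite A).toFinset with hAf
  have hmemAf : ∀ a, a ∈ Af ↔ a ∈ A := fun a => (Set.toFinite A).mem_toFinset
  have hdisj : ∀ a ∈ Af, ∀ b ∈ Af, a ≠ b → Disjoint (B a) (B b) := by
    intro a ha b hb hne
    rw [Finset.disjoint_left]
    intro v hva hvb
    simp only [hB, Finset.mem_filter, Finset.mem_univ, true_and] at hva hvb
    have h1 : k+1 ≤ T.dist a b := hA.2 ((hmemAf a).mp ha) ((hmemAf b).mp hb) hne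
    have t1 := hconn.dist_triangle (u := a) (v := v) (w := b)
    have c1 : T.dist b v = T.dist v b := SimpleGraph.dist_comm ..
    omega
  have hsum : Af.card * (m+1) ≤ (Af.biUnion B).card := by
    rw [Finset.card_biUnion hdisj]
    calc Af.card * (m+1) = ∑ _a ∈ Af, (m+1) := by rw [Finset.sum_const, smul_eq_mul]
      _ ≤ ∑ a ∈ Af, (B a).card := Finset.sum_le_sum (fun a _ => hcard a)
  have hv₀' : v₀ ∉ Af.biUnion B := by
    simp only [Finset.mem_biUnion, not_exists]
    rintro a ⟨ha, hvB⟩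
    simp only [hB, Finset.mem_filter, Finset.mem_univ, true_and] at hvB
    exact hv₀ a ((hmemAf a).mp ha) hvB
  have hcardle := Finset.card_le_univ (insert v₀ (Af.biUnion B))
  rw [Finset.card_insert_of_notMem hv₀'] at hcardle
  have hAcard : A.ncard = Af.card := Set.ncard_eq_toFinset_card A
  rw [hAcard]
  omega

end PartD
section MainAux
open SimpleGraph

theorem stmt_17' (k : ℕ) (hk : 3 ≤ k) (hodd : Odd k) {V : Type} [Fintype V]
    {n : ℕ} (hn : Fintype.card V = n) (T : SimpleGraph V) (hT : T.IsTree)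
    (hdiam : k + 3 ≤ Finset.univ.sup (fun v => Finset.univ.sup (T.dist v))) :
    (if n ≤ k + 1 then n else n - (n - k % 2) / (k / 2 + 1) + 1)
      < {J : Set V | (∀ ⦃u⦄, u ∈ J → ∀ ⦃v⦄, v ∈ J → u ≠ v → k + 1 ≤ T.dist u v) ∧
          ∀ J', (∀ ⦃u⦄, u ∈ J' → ∀ ⦃v⦄, v ∈ J' → u ≠ v → k + 1 ≤ T.dist u v) → J ⊆ J' → J' = J}.ncard := by
  classical
  have hconn := hT.isConnected
  have hk2 : k % 2 = 1 := Nat.odd_iff.mp hodd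
  have hVne : Nonempty V := by
    by_contra h
    rw [not_nonempty_iff] at h
    rw [Finset.univ_eq_empty, Finset.sup_empty] at hdiam
    rw [Nat.bot_eq_zero] at hdiam
    omega
  obtain ⟨x, -, hx⟩ := Finset.exists_mem_eq_sup (Finset.univ : Finset V) Finset.univ_nonempty
    (fun v => Finset.univ.sup (T.dist v))
  obtain ⟨y, -, hy⟩ := Finset.exists_mem_eq_sup (Finset.univ : Finset V) Finset.univ_nonempty
    (T.dist x)
  have hgd : Finset.univ.sup (fun v => Finset.univ.sup (T.dist v)) = T.dist x y := by
    rw [hx]; exact hy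
  have hD : k + 3 ≤ T.dist x y := by omega
  have hdeep : ∀ z : V, T.dist y z ≤ T.dist y x := by
    intro z
    have h1 : T.dist y z ≤ Finset.univ.sup (T.dist y) := Finset.le_sup (Finset.mem_univ z)
    have h2 : Finset.univ.sup (T.dist y) ≤ Finset.univ.sup (fun v => Finset.univ.sup (T.dist v)) :=
      Finset.le_sup (f := fun v => Finset.univ.sup (T.dist v)) (Finset.mem_univ y)
    have h3 : T.dist y x = T.dist x y := SimpleGraph.dist_comm ..
    omega
  obtain ⟨W, hW⟩ := hconn.exists_walk_length_eq_dist x y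
  have hlen : k + 3 ≤ W.length := by omega
  set u₁ := W.getVert 1 with hu₁def
  set z := W.getVert (k+2) with hzdef
  set z' := W.getVert (k+3) with hz'def
  have d1 : T.dist x u₁ = 1 := (getVert_dist_eq hconn W hW (i := 1) (by omega)).1
  have dz : T.dist u₁ z = k+1 := by
    have h := getVert_dist_pair hconn W hW (i := 1) (j := k+2) (by omega) (by omega)
    rw [← hu₁def, ← hzdef] at h
    omega
  have dz' : T.dist u₁ z' = k+2 := by
    have h := getVert_dist_pair hconn W hW (i := 1) (j := k+3) (by omega) (by omega)
    rw [← hu₁def, ← hz'def] at h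
    omega
  have dzz' : T.dist z z' = 1 := by
    have h := getVert_dist_pair hconn W hW (i := k+2) (j := k+3) (by omega) (by omega)
    rw [← hzdef, ← hz'def] at h
    omega
  have hn4 : k + 4 ≤ n := by
    have hinj : Function.Injective (fun i : Fin (W.length + 1) => W.getVert i) := by
      intro i j hij
      have hi := i.isLt
      have hj := j.isLt
      have h1 := (getVert_dist_eq hconn W hW (i := (i : ℕ)) (by omega)).1
      have h2 := (getVert_dist_eq hconn W hW (i := (j : ℕ)) (by omega)).1
      simp only at hij
      rw [hij] at h1
      exact Fin.ext (by omega)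
    have hcard := Fintype.card_le_of_injective _ hinj
    rw [Fintype.card_fin] at hcard
    omega
  -- the target set equals MaxIn sets
  have hset : {J : Set V | (∀ ⦃u⦄, u ∈ J → ∀ ⦃v⦄, v ∈ J → u ≠ v → k + 1 ≤ T.dist u v) ∧
      ∀ J', (∀ ⦃u⦄, u ∈ J' → ∀ ⦃v⦄, v ∈ J' → u ≠ v → k + 1 ≤ T.dist u v) → J ⊆ J' → J' = J}
      = {J | MaxIn T k Set.univ J} := by
    ext J
    simp only [Set.mem_setOf_eq]
    constructor
    · rintro ⟨h1, h2⟩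
      refine ⟨⟨Set.subset_univ J, fun a ha b hb hab => h1 ha hb hab⟩, ?_⟩
      intro v _ hvJ
      by_contra hno
      push_neg at hno
      have hJ' : ∀ ⦃a⦄, a ∈ insert v J → ∀ ⦃b⦄, b ∈ insert v J → a ≠ b → k + 1 ≤ T.dist a b := by
        intro a ha b hb hab
        rcases Set.mem_insert_iff.mp ha with ha' | ha'
        · rcases Set.mem_insert_iff.mp hb with hb' | hb'
          · exact absurd (ha'.trans hb'.symm) hab
          · rw [ha']
            have := hno b hb'
            omega
        · rcases Set.mem_insert_iff.mp hb with hb' | hb'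
          · rw [hb']
            have h4 := hno a ha'
            have h5 : T.dist a v = T.dist v a := SimpleGraph.dist_comm ..
            omega
          · exact h1 ha' hb' hab
      have heq := h2 _ hJ' (Set.subset_insert v J)
      exact hvJ (heq ▸ Set.mem_insert v J)
    · rintro ⟨⟨-, h1⟩, h2⟩
      refine ⟨fun a ha b hb hab => h1 ha hb hab, ?_⟩
      intro J' hJ' hsub
      refine Set.Subset.antisymm ?_ hsub
      intro v hv
      by_contra hvJ
      obtain ⟨j, hj, hd⟩ := h2 v (Set.mem_univ v) hvJ
      have hne : v ≠ j := fun h => hvJ (h ▸ hj)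
      have := hJ' hv (hsub hj) hne
      omega
  rw [hset]
  -- counting
  have hxdist : T.dist x x ≤ k := by simp [SimpleGraph.dist_self]
  have hu₁dist : T.dist x u₁ ≤ k := by omega
  have hxC : x ∈ {v | v ∈ (Set.univ : Set V) ∧ T.dist x v ≤ k} := ⟨trivial, hxdist⟩
  have hu₁C : u₁ ∈ {v | v ∈ (Set.univ : Set V) ∧ T.dist x v ≤ k} := ⟨trivial, hu₁dist⟩
  have hxu₁ : x ≠ u₁ := by
    intro h
    rw [← h, SimpleGraph.dist_self] at d1
    omega
  have hzne : z ≠ z' := by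
    intro h
    rw [h, SimpleGraph.dist_self] at dzz'
    omega
  have hdeepU : ∀ z₀ ∈ (Set.univ : Set V), T.dist y z₀ ≤ T.dist y x := fun z₀ _ => hdeep z₀
  have huniq : ∀ {J : Set V}, MaxIn T k Set.univ J → ∀ {c c' : V}, c ∈ J → c' ∈ J →
      T.dist x c ≤ k → T.dist x c' ≤ k → c = c' := by
    intro J hJ c c' hc hc' h1 h2
    exact class_unique hT hdeepU hJ hc hc' h1 h2
  have hpair1 : IndepIn T k Set.univ {u₁, z} := by
    refine ⟨Set.subset_univ _, ?_⟩
    rw [Set.pairwise_insert]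
    refine ⟨Set.pairwise_singleton _ _, ?_⟩
    intro b hb _
    rw [Set.mem_singleton_iff] at hb
    subst hb
    have hc : T.dist z u₁ = T.dist u₁ z := SimpleGraph.dist_comm ..
    constructor <;> omega
  have hpair2 : IndepIn T k Set.univ {u₁, z'} := by
    refine ⟨Set.subset_univ _, ?_⟩
    rw [Set.pairwise_insert]
    refine ⟨Set.pairwise_singleton _ _, ?_⟩
    intro b hb _
    rw [Set.mem_singleton_iff] at hb
    subst hb
    have hc : T.dist z' u₁ = T.dist u₁ z' := SimpleGraph.dist_comm ..
    constructor <;> omega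
  obtain ⟨J₁, hJ₁, hsub1⟩ := exists_maxIn_ext T k Set.univ {u₁, z} hpair1
  obtain ⟨J₂, hJ₂, hsub2⟩ := exists_maxIn_ext T k Set.univ {u₁, z'} hpair2
  have hu₁J₁ : u₁ ∈ J₁ := hsub1 (Set.mem_insert _ _)
  have hzJ₁ : z ∈ J₁ := hsub1 (Set.mem_insert_of_mem _ rfl)
  have hu₁J₂ : u₁ ∈ J₂ := hsub2 (Set.mem_insert _ _)
  have hz'J₂ : z' ∈ J₂ := hsub2 (Set.mem_insert_of_mem _ rfl)
  have hzJ₂ : z ∉ J₂ := by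
    intro hz2
    have := hJ₂.1.2 hz2 hz'J₂ hzne
    omega
  have hJ₁J₂ : J₁ ≠ J₂ := fun h => hzJ₂ (h ▸ hzJ₁)
  have hext : ∀ c ∈ {v | v ∈ (Set.univ : Set V) ∧ T.dist x v ≤ k} \ {x, u₁},
      ∃ J, MaxIn T k Set.univ J ∧ c ∈ J := by
    intro c _
    obtain ⟨J, hJ, hcJ⟩ := exists_maxIn_ext T k Set.univ {c}
      ⟨Set.subset_univ _, Set.pairwise_singleton _ _⟩
    exact ⟨J, hJ, hcJ rfl⟩
  choose! g hg1 hg2 using hext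
  have hgx : ∀ c ∈ {v | v ∈ (Set.univ : Set V) ∧ T.dist x v ≤ k} \ {x, u₁}, x ∉ g c := by
    intro c hc hxg
    have hcx : x = c := huniq (hg1 c hc) hxg (hg2 c hc) hxdist hc.1.2
    exact hc.2 (by rw [← hcx]; exact Set.mem_insert _ _)
  have hgu₁ : ∀ c ∈ {v | v ∈ (Set.univ : Set V) ∧ T.dist x v ≤ k} \ {x, u₁}, u₁ ∉ g c := by
    intro c hc hug
    have hcu : u₁ = c := huniq (hg1 c hc) hug (hg2 c hc) hu₁dist hc.1.2
    exact hc.2 (by rw [← hcu]; exact Set.mem_insert_of_mem _ rfl)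
  have hxnot : ∀ J' ∈ {J' | MaxIn T k ((Set.univ : Set V) \
      {v | v ∈ (Set.univ : Set V) ∧ T.dist x v ≤ k}) J'}, x ∉ J' :=
    fun J' hJ' hxJ' => ((hJ'.1.1 hxJ').2) hxC
  have hM1sub : (insert x ·) '' {J' | MaxIn T k ((Set.univ : Set V) \
      {v | v ∈ (Set.univ : Set V) ∧ T.dist x v ≤ k}) J'}
      ⊆ {J | MaxIn T k (Set.univ : Set V) J} := by
    rintro _ ⟨J', hJ', rfl⟩
    exact maxIn_insert (Set.mem_univ x) hJ'
  have hinj1 : Set.InjOn (insert x ·) {J' | MaxIn T k ((Set.univ : Set V) \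
      {v | v ∈ (Set.univ : Set V) ∧ T.dist x v ≤ k}) J'} := by
    intro a ha b hb hab
    have hab' : insert x a = insert x b := hab
    rw [← Set.insert_diff_self_of_notMem (hxnot a ha), hab',
        Set.insert_diff_self_of_notMem (hxnot b hb)]
  have hM2sub : g '' ({v | v ∈ (Set.univ : Set V) ∧ T.dist x v ≤ k} \ {x, u₁})
      ⊆ {J | MaxIn T k (Set.univ : Set V) J} := by
    rintro _ ⟨c, hc, rfl⟩
    exact hg1 c hc
  have hinj2 : Set.InjOn g ({v | v ∈ (Set.univ : Set V) ∧ T.dist x v ≤ k} \ {x, u₁}) := by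
    intro c hc c' hc' hgc
    refine huniq (hg1 c hc) (hg2 c hc) ?_ hc.1.2 hc'.1.2
    rw [hgc]
    exact hg2 c' hc'
  have hxJ₁ : x ∉ J₁ := fun hxJ => hxu₁ (huniq hJ₁ hxJ hu₁J₁ hxdist hu₁dist)
  have hxJ₂ : x ∉ J₂ := fun hxJ => hxu₁ (huniq hJ₂ hxJ hu₁J₂ hxdist hu₁dist)
  have hd12 : Disjoint ((insert x ·) '' {J' | MaxIn T k ((Set.univ : Set V) \
      {v | v ∈ (Set.univ : Set V) ∧ T.dist x v ≤ k}) J'})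
      (g '' ({v | v ∈ (Set.univ : Set V) ∧ T.dist x v ≤ k} \ {x, u₁})) := by
    rw [Set.disjoint_left]
    rintro _ ⟨J', hJ', rfl⟩ ⟨c, hc, hgc⟩
    exact hgx c hc (by rw [hgc]; exact Set.mem_insert x J')
  have hd13 : Disjoint ((insert x ·) '' {J' | MaxIn T k ((Set.univ : Set V) \
      {v | v ∈ (Set.univ : Set V) ∧ T.dist x v ≤ k}) J'}) ({J₁, J₂} : Set (Set V)) := by
    rw [Set.disjoint_left]
    rintro _ ⟨J', hJ', rfl⟩ hmem
    rcases Set.mem_insert_iff.mp hmem with h | h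
    · exact hxJ₁ (h ▸ Set.mem_insert x J')
    · rw [Set.mem_singleton_iff] at h
      exact hxJ₂ (h ▸ Set.mem_insert x J')
  have hd23 : Disjoint (g '' ({v | v ∈ (Set.univ : Set V) ∧ T.dist x v ≤ k} \ {x, u₁}))
      ({J₁, J₂} : Set (Set V)) := by
    rw [Set.disjoint_left]
    rintro _ ⟨c, hc, rfl⟩ hmem
    rcases Set.mem_insert_iff.mp hmem with h | h
    · exact hgu₁ c hc (by rw [h]; exact hu₁J₁)
    · rw [Set.mem_singleton_iff] at h
      exact hgu₁ c hc (by rw [h]; exact hu₁J₂)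
  have hsubU : ((insert x ·) '' {J' | MaxIn T k ((Set.univ : Set V) \
      {v | v ∈ (Set.univ : Set V) ∧ T.dist x v ≤ k}) J'})
      ∪ (g '' ({v | v ∈ (Set.univ : Set V) ∧ T.dist x v ≤ k} \ {x, u₁}))
      ∪ ({J₁, J₂} : Set (Set V)) ⊆ {J | MaxIn T k (Set.univ : Set V) J} := by
    refine Set.union_subset (Set.union_subset hM1sub hM2sub) ?_
    intro J hmem
    rcases Set.mem_insert_iff.mp hmem with h | h
    · rw [h]; exact hJ₁
    · rw [Set.mem_singleton_iff] at h
      rw [h]; exact hJ₂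
  have hcard3 : ({J₁, J₂} : Set (Set V)).ncard = 2 := Set.ncard_pair hJ₁J₂
  have hcount : ((insert x ·) '' {J' | MaxIn T k ((Set.univ : Set V) \
      {v | v ∈ (Set.univ : Set V) ∧ T.dist x v ≤ k}) J'}).ncard
      + (g '' ({v | v ∈ (Set.univ : Set V) ∧ T.dist x v ≤ k} \ {x, u₁})).ncard + 2
      ≤ numIn T k Set.univ := by
    have e1 := Set.ncard_union_eq (Set.disjoint_union_left.mpr ⟨hd13, hd23⟩)
      (Set.toFinite _) (Set.toFinite _)
    have e2 := Set.ncard_union_eq hd12 (Set.toFinite _) (Set.toFinite _)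
    have e3 := Set.ncard_le_ncard hsubU (Set.toFinite _)
    rw [e2] at e1
    rw [e1, hcard3] at e3
    exact e3
  have hM1card : ((insert x ·) '' {J' | MaxIn T k ((Set.univ : Set V) \
      {v | v ∈ (Set.univ : Set V) ∧ T.dist x v ≤ k}) J'}).ncard
      = numIn T k ((Set.univ : Set V) \ {v | v ∈ (Set.univ : Set V) ∧ T.dist x v ≤ k}) :=
    Set.ncard_image_of_injOn hinj1
  have hM2card : (g '' ({v | v ∈ (Set.univ : Set V) ∧ T.dist x v ≤ k} \ {x, u₁})).ncard
      = ({v | v ∈ (Set.univ : Set V) ∧ T.dist x v ≤ k} \ {x, u₁}).ncard :=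
    Set.ncard_image_of_injOn hinj2
  have hpairsub : ({x, u₁} : Set V) ⊆ {v | v ∈ (Set.univ : Set V) ∧ T.dist x v ≤ k} := by
    intro v hv
    rcases Set.mem_insert_iff.mp hv with rfl | hv
    · exact hxC
    · rw [Set.mem_singleton_iff] at hv
      subst hv
      exact hu₁C
  have hCsplit : ({v | v ∈ (Set.univ : Set V) ∧ T.dist x v ≤ k} \ {x, u₁}).ncard + 2
      = {v | v ∈ (Set.univ : Set V) ∧ T.dist x v ≤ k}.ncard := by
    have h := Set.ncard_diff_add_ncard_of_subset hpairsub (Set.toFinite _)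
    rw [Set.ncard_pair hxu₁] at h
    exact h
  have hB := lemB hT k ((Set.univ : Set V) \
    {v | v ∈ (Set.univ : Set V) ∧ T.dist x v ≤ k}).ncard
    ((Set.univ : Set V) \ {v | v ∈ (Set.univ : Set V) ∧ T.dist x v ≤ k}) le_rfl
  have hAstep := alf_step T k (S := (Set.univ : Set V)) (x := x) (Set.mem_univ x)
  have hsplitU : ((Set.univ : Set V) \ {v | v ∈ (Set.univ : Set V) ∧ T.dist x v ≤ k}).ncard
      + {v | v ∈ (Set.univ : Set V) ∧ T.dist x v ≤ k}.ncard = (Set.univ : Set V).ncard :=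
    Set.ncard_diff_add_ncard_of_subset (fun v hv => trivial) (Set.toFinite _)
  have hNuniv : (Set.univ : Set V).ncard = n := by
    rw [Set.ncard_univ, Nat.card_eq_fintype_card, hn]
  obtain ⟨A, hA, hAattain⟩ := exists_alf_attain T k (Set.univ : Set V)
  have hkm : k = 2*(k/2)+1 := by omega
  have halpha := alpha_bound hT hkm (x := x) (y := y) (by omega) hA
  rw [hn] at halpha
  have hq0 : alfIn T k Set.univ * (k/2+1) + 1 ≤ n := by
    rw [← hAattain]
    exact halpha
  obtain ⟨q, hq1, hq2, hfk⟩ : ∃ q, alfIn T k Set.univ ≤ q ∧ q ≤ n - 1 ∧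
      (if n ≤ k + 1 then n else n - (n - k % 2) / (k / 2 + 1) + 1) = n - q + 1 := by
    refine ⟨(n-1)/(k/2+1), ?_, Nat.div_le_self _ _, ?_⟩
    · rw [Nat.le_div_iff_mul_le (by omega)]
      exact Nat.le_sub_of_add_le hq0
    · rw [if_neg (by omega), hk2]
  rw [hfk]
  have hnum : numIn T k Set.univ = {J | MaxIn T k Set.univ J}.ncard := rfl
  omega

/-- Let `k ≥ 3` be odd and let `T` be a tree on `n` vertices of diameter
at least `k + 3`. Then `mdi_k(T) > f_k(n)`. -/
theorem stmt_17 (k : ℕ) (hk : 3 ≤ k) (hodd : Odd k) {V : Type} [Fintype V]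
    {n : ℕ} (hn : Fintype.card V = n) (T : SimpleGraph V) (hT : T.IsTree)
    (hdiam : k + 3 ≤ gdiam T) :
    fk k n < mdi T k :=
  stmt_17' k hk hodd hn T hT hdiam
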